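/- Fix m ∈ ℕ₀, τ ∈ ℍ and w ∈ ℂ with 0 < |q| < |q_w| < 1. As a function of z, the meromorphic continuation of P̃_{m+1}(w,z,τ) has a simple pole at each point z = λτ + μ with λ, μ ∈ ℤ, with residue equal to λ^m q_w^{−λ} / (m! · 2πi), and it has no other poles in z. -/

import Mathlib

open Complex Filter Topology

/-- `e(x) = e^{2πix}`; thus `q = eF τ`, `q_w = eF w`, `q_z = eF z`. -/
noncomputable def eF (x : ℂ) : ℂ := Complex.exp (2 * (Real.pi : ℂ) * Complex.I * x)

lemma eF_ne_zero (x : ℂ) : eF x ≠ 0 := Complex.exp_ne_zero _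

lemma eF_add (x y : ℂ) : eF (x + y) = eF x * eF y := by
  rw [eF, eF, eF, ← Complex.exp_add]; ring_nf

lemma eF_zpow (x : ℂ) (n : ℤ) : eF x ^ n = eF (n * x) := by
  rw [eF, eF, ← Complex.exp_int_mul]; ring_nf

lemma abs_eF (x : ℂ) : ‖eF x‖ = Real.exp (-(2 * Real.pi * x.im)) := by
  rw [eF, Complex.norm_exp]
  congr 1
  simp [Complex.mul_re, Complex.mul_im]

lemma eF_eq_one_iff (x : ℂ) : eF x = 1 ↔ ∃ k : ℤ, x = (k : ℂ) := by
  rw [eF, Complex.exp_eq_one_iff]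
  constructor
  · rintro ⟨n, hn⟩
    refine ⟨n, mul_left_cancel₀ Complex.two_pi_I_ne_zero ?_⟩
    rw [hn]; ring
  · rintro ⟨k, rfl⟩
    exact ⟨k, by ring⟩

lemma abs_eF_lt_abs_eF {x y : ℂ} :
    ‖eF x‖ < ‖eF y‖ ↔ y.im < x.im := by
  rw [abs_eF, abs_eF, Real.exp_lt_exp]
  constructor <;> intro h <;> nlinarith [Real.pi_pos]

lemma abs_eF_lt_one {x : ℂ} : ‖eF x‖ < 1 ↔ 0 < x.im := by
  rw [abs_eF, ← Real.exp_zero, Real.exp_lt_exp]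
  constructor <;> intro h <;> nlinarith [Real.pi_pos]

lemma differentiable_eF : Differentiable ℂ eF := by
  unfold eF; fun_prop

lemma analyticAt_eF (z : ℂ) : AnalyticAt ℂ eF z := differentiable_eF.analyticAt z

lemma hasDerivAt_eF (z : ℂ) :
    HasDerivAt eF (2 * (Real.pi : ℂ) * Complex.I * eF z) z := by
  have h : HasDerivAt (fun z : ℂ => 2 * (Real.pi : ℂ) * Complex.I * z)
      (2 * (Real.pi : ℂ) * Complex.I) z := by
    simpa using (hasDerivAt_id z).const_mul (2 * (Real.pi : ℂ) * Complex.I)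
  have := h.cexp
  rw [show eF = fun z : ℂ => Complex.exp (2 * (Real.pi : ℂ) * Complex.I * z) from rfl]
  exact this.congr_deriv (by beta_reduce; ring)

/-- uniqueness of the "bad index" -/
lemma bad_unique {τ : ℂ} (hτ : 0 < τ.im) {z : ℂ} {n₁ n₂ : ℤ}
    (h1 : eF z * eF τ ^ n₁ = 1) (h2 : eF z * eF τ ^ n₂ = 1) : n₁ = n₂ := by
  have h3 : eF (z + n₁ * τ) = eF (z + n₂ * τ) := by
    rw [eF_add, eF_add, ← eF_zpow, ← eF_zpow, h1, h2]
  have h4 : eF ((n₁ - n₂ : ℤ) * τ) = 1 := by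
    have h5 : eF ((n₁ - n₂ : ℤ) * τ) * eF (z + n₂ * τ) = eF (z + n₂ * τ) := by
      rw [← eF_add]; rw [show ((n₁ - n₂ : ℤ) : ℂ) * τ + (z + n₂ * τ) = z + n₁ * τ by
        push_cast; ring]
      exact h3
    have := mul_right_cancel₀ (eF_ne_zero (z + n₂ * τ)) (h5.trans (one_mul _).symm)
    exact this
  rw [eF_eq_one_iff] at h4
  obtain ⟨k, hk⟩ := h4
  have him := congrArg Complex.im hk
  simp [Complex.mul_im] at him
  rcases him with him | him
  · exact_mod_cast sub_eq_zero.mp him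
  · exact absurd him (ne_of_gt hτ)

noncomputable def gm (m : ℕ) (τ w : ℂ) (n : ℤ) (z : ℂ) : ℂ :=
  (n : ℂ) ^ m * eF w ^ n / (1 - eF z * eF τ ^ n)

noncomputable def Gm (m : ℕ) (τ w : ℂ) (z : ℂ) : ℂ := ∑' n : ℤ, gm m τ w n z

lemma analyticAt_den (τ : ℂ) (n : ℤ) (z₀ : ℂ) :
    AnalyticAt ℂ (fun z => 1 - eF z * eF τ ^ n) z₀ :=
  analyticAt_const.sub ((analyticAt_eF z₀).mul analyticAt_const)

lemma analyticAt_gm {τ w : ℂ} (m : ℕ) (n : ℤ) {z₀ : ℂ}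
    (h : 1 - eF z₀ * eF τ ^ n ≠ 0) : AnalyticAt ℂ (gm m τ w n) z₀ :=
  analyticAt_const.div (analyticAt_den τ n z₀) h

set_option maxHeartbeats 1000000 in
/-- The master lemma: near any point avoiding the poles of all terms except possibly the
`n₀`-th one, the series `Gm` splits as the `n₀`-th term plus a function analytic there. -/
lemma master (m : ℕ) (τ w : ℂ) (hτ : 0 < τ.im)
    (hqw : ‖eF τ‖ < ‖eF w‖) (hw1 : ‖eF w‖ < 1)
    (z₀ : ℂ) (n₀ : ℤ) (hpol : ∀ n : ℤ, n ≠ n₀ → 1 - eF z₀ * eF τ ^ n ≠ 0) :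
    ∃ T : ℂ → ℂ, AnalyticAt ℂ T z₀ ∧ ∀ᶠ z in 𝓝 z₀, Gm m τ w z = gm m τ w n₀ z + T z := by
  set a := ‖eF τ‖ with ha_def
  set b := ‖eF w‖ with hb_def
  have ha0 : 0 < a := norm_pos_iff.mpr (eF_ne_zero τ)
  have hb0 : 0 < b := norm_pos_iff.mpr (eF_ne_zero w)
  have ha1 : a < 1 := lt_trans hqw hw1
  set A₁ := Real.exp (-(2 * Real.pi * (z₀.im + 1))) with hA₁def
  set A₂ := Real.exp (-(2 * Real.pi * (z₀.im - 1))) with hA₂def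
  have hA₁0 : 0 < A₁ := Real.exp_pos _
  have hA₂0 : 0 < A₂ := Real.exp_pos _
  -- bounds for |eF z| on the unit ball around z₀
  have habs : ∀ z ∈ Metric.ball z₀ 1,
      A₁ ≤ ‖eF z‖ ∧ ‖eF z‖ ≤ A₂ := by
    intro z hz
    have him : |z.im - z₀.im| < 1 := by
      have h1 : |(z - z₀).im| ≤ ‖z - z₀‖ := Complex.abs_im_le_norm _
      have h2 : ‖z - z₀‖ < 1 := by
        rw [← Complex.dist_eq]; exact hz
      rw [Complex.sub_im] at h1
      linarith
    rw [abs_lt] at him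
    rw [abs_eF]
    constructor
    · rw [hA₁def, Real.exp_le_exp]; nlinarith [Real.pi_pos]
    · rw [hA₂def, Real.exp_le_exp]; nlinarith [Real.pi_pos]
  -- choose N
  obtain ⟨N, hN⟩ : ∃ N : ℕ, a ^ (N + 1) ≤ min (1 / (2 * A₂)) (A₁ / 2) := by
    have hmin : 0 < min (1 / (2 * A₂)) (A₁ / 2) := by positivity
    obtain ⟨N, hN⟩ := exists_pow_lt_of_lt_one hmin ha1
    exact ⟨N, le_of_lt (lt_of_le_of_lt
      (pow_le_pow_of_le_one ha0.le ha1.le (by omega)) hN)⟩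
  have hmono : ∀ j k : ℤ, j ≤ k → a ^ k ≤ a ^ j :=
    fun j k hjk => zpow_le_zpow_right_of_le_one₀ ha0 ha1.le hjk
  set ρ : ℝ := max b (a / b) with hρdef
  have hρ0 : 0 < ρ := lt_of_lt_of_le hb0 (le_max_left _ _)
  have hρ1 : ρ < 1 := max_lt hw1 ((div_lt_one hb0).mpr hqw)
  set C : ℝ := max 2 (2 / A₁) with hCdef
  have hC2 : (2:ℝ) ≤ C := le_max_left _ _
  have hC0 : 0 < C := lt_of_lt_of_le two_pos hC2
  set u : ℤ → ℝ := fun n => C * (n.natAbs : ℝ) ^ m * ρ ^ n.natAbs with hudef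
  have hu0 : ∀ n, 0 ≤ u n := fun n => by positivity
  have hu : Summable u := by
    have hbase : Summable (fun k : ℕ => C * ((k : ℝ) ^ m * ρ ^ k)) :=
      (summable_pow_mul_geometric_of_norm_lt_one m
        (by rwa [Real.norm_eq_abs, abs_of_pos hρ0])).mul_left C
    apply Summable.of_nat_of_neg
    · exact hbase.congr (fun k => by simp [hudef, mul_assoc])
    · exact hbase.congr (fun k => by simp [hudef, mul_assoc])
  set sBad : Finset ℤ := insert n₀ (Finset.Icc (-(N : ℤ) - 1) ((N : ℤ) + 1)) with hsBad
  have hn₀Bad : n₀ ∈ sBad := Finset.mem_insert_self _ _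
  -- the key estimates
  have hkey : ∀ n ∉ sBad, ∀ z ∈ Metric.ball z₀ 1,
      (1 - eF z * eF τ ^ n ≠ 0) ∧ ‖gm m τ w n z‖ ≤ u n := by
    intro n hn z hz
    obtain ⟨h₁, h₂⟩ := habs z hz
    have hcase : ((N : ℤ) + 1 ≤ n ∨ n ≤ -((N : ℤ) + 1)) := by
      simp only [hsBad, Finset.mem_insert, Finset.mem_Icc, not_or, not_and_or, not_le] at hn
      omega
    have habs_prod : ‖eF z * eF τ ^ n‖ = ‖eF z‖ * a ^ n := by
      rw [norm_mul, norm_zpow]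
    have hnum : ‖(n : ℂ) ^ m * eF w ^ n‖ = ((n.natAbs : ℝ)) ^ m * b ^ n := by
      rw [norm_mul, norm_pow, norm_zpow, Complex.norm_intCast]
      congr 2
      rw [Nat.cast_natAbs]
      simp
    have hgm_eq : ‖gm m τ w n z‖
        = ‖(n : ℂ) ^ m * eF w ^ n‖ / ‖1 - eF z * eF τ ^ n‖ := by
      rw [gm, norm_div]
    have haN : a ^ ((N:ℤ) + 1) = a ^ (N + 1 : ℕ) := by
      rw [← zpow_natCast]; norm_cast
    rcases hcase with hpos | hneg
    · -- n ≥ N+1 : |q_z q^n| ≤ 1/2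
      have hsmall : ‖eF z‖ * a ^ n ≤ 1 / 2 := by
        have h3 : a ^ n ≤ a ^ ((N:ℤ) + 1) := hmono _ _ hpos
        rw [haN] at h3
        have h4 : a ^ (N + 1 : ℕ) ≤ 1 / (2 * A₂) := le_trans hN (min_le_left _ _)
        calc ‖eF z‖ * a ^ n ≤ A₂ * (1 / (2 * A₂)) := by
              apply mul_le_mul h₂ (le_trans h3 h4) (le_of_lt (by positivity)) hA₂0.le
          _ = 1 / 2 := by field_simp
      have hden : (1:ℝ) / 2 ≤ ‖1 - eF z * eF τ ^ n‖ := by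
        have h7 : (1:ℝ) - ‖eF z * eF τ ^ n‖
            ≤ ‖1 - eF z * eF τ ^ n‖ := by
          simpa using norm_sub_norm_le (1:ℂ) (eF z * eF τ ^ n)
        rw [habs_prod] at h7
        linarith
      have hdenne : 1 - eF z * eF τ ^ n ≠ 0 := by
        intro h; rw [h, norm_zero] at hden; linarith
      refine ⟨hdenne, ?_⟩
      rw [hgm_eq, hnum]
      have hbn : b ^ n ≤ ρ ^ n.natAbs := by
        have h5 : b ^ n = b ^ n.natAbs := by
          rw [← zpow_natCast]; congr 1; omega
        rw [h5]
        exact pow_le_pow_left₀ hb0.le (le_max_left _ _) _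
      calc ((n.natAbs : ℝ)) ^ m * b ^ n / ‖1 - eF z * eF τ ^ n‖
          ≤ ((n.natAbs : ℝ)) ^ m * b ^ n / (1/2) := by
            apply div_le_div_of_nonneg_left _ (by norm_num) hden
            positivity
        _ = 2 * ((n.natAbs : ℝ)) ^ m * b ^ n := by ring
        _ ≤ C * ((n.natAbs : ℝ)) ^ m * ρ ^ n.natAbs := by
            apply mul_le_mul (mul_le_mul hC2 le_rfl (by positivity) hC0.le) hbn
              (by positivity) (by positivity)
    · -- n ≤ -(N+1) : |q_z q^n| ≥ 2
      have hbig : 2 / A₁ ≤ a ^ n := by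
        have h3 : a ^ (-((N:ℤ) + 1)) ≤ a ^ n := hmono _ _ hneg
        have h4 : a ^ (-((N:ℤ) + 1)) = (a ^ (N + 1 : ℕ))⁻¹ := by
          rw [zpow_neg, haN]
        have h5 : a ^ (N + 1 : ℕ) ≤ A₁ / 2 := le_trans hN (min_le_right _ _)
        have hx : (0:ℝ) < a ^ (N + 1 : ℕ) := by positivity
        have h6 : 2 / A₁ ≤ (a ^ (N + 1 : ℕ))⁻¹ := by
          rw [div_le_iff₀ hA₁0, inv_mul_eq_div, le_div_iff₀ hx]
          linarith
        rw [h4] at h3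
        linarith
      have hapos : (0:ℝ) < a ^ n := zpow_pos ha0 n
      have hbig2 : (2:ℝ) ≤ ‖eF z‖ * a ^ n := by
        calc (2:ℝ) = A₁ * (2 / A₁) := by field_simp
          _ ≤ ‖eF z‖ * a ^ n :=
              mul_le_mul h₁ hbig (by positivity) (by positivity)
      have hd2 : A₁ * a ^ n / 2 ≤ ‖1 - eF z * eF τ ^ n‖ := by
        have h7 : ‖eF z * eF τ ^ n‖ - 1
            ≤ ‖1 - eF z * eF τ ^ n‖ := by
          have h8 := norm_sub_norm_le (eF z * eF τ ^ n) (1:ℂ)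
          rw [norm_sub_rev] at h8
          simpa using h8
        rw [habs_prod] at h7
        nlinarith [h₁, hapos]
      have hdenne : 1 - eF z * eF τ ^ n ≠ 0 := by
        intro h; rw [h, norm_zero] at hd2; nlinarith
      refine ⟨hdenne, ?_⟩
      rw [hgm_eq, hnum]
      have hbzpos : (0:ℝ) < b ^ n := zpow_pos hb0 n
      have hbden : (0:ℝ) < A₁ * a ^ n / 2 := by positivity
      have hba : (b / a) ^ n = (a / b) ^ n.natAbs := by
        rw [← inv_div, inv_zpow, ← zpow_neg, ← zpow_natCast]
        congr 1; omega
      calc ((n.natAbs : ℝ)) ^ m * b ^ n / ‖1 - eF z * eF τ ^ n‖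
          ≤ ((n.natAbs : ℝ)) ^ m * b ^ n / (A₁ * a ^ n / 2) := by
            apply div_le_div_of_nonneg_left _ hbden hd2
            positivity
        _ = (2 / A₁) * ((n.natAbs : ℝ)) ^ m * (b / a) ^ n := by
            rw [div_zpow]; field_simp
        _ = (2 / A₁) * ((n.natAbs : ℝ)) ^ m * (a / b) ^ n.natAbs := by rw [hba]
        _ ≤ C * ((n.natAbs : ℝ)) ^ m * ρ ^ n.natAbs := by
            apply mul_le_mul
              (mul_le_mul (le_max_right _ _) le_rfl (by positivity) hC0.le)
              (pow_le_pow_left₀ (by positivity) (le_max_right _ _) _)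
              (by positivity) (by positivity)
  -- the tail function
  set ψ : ℤ → ℂ → ℂ := fun n z => if n ∈ sBad then 0 else gm m τ w n z with hψdef
  have hψu : ∀ (n : ℤ), ∀ z ∈ Metric.ball z₀ 1, ‖ψ n z‖ ≤ u n := by
    intro n z hz
    by_cases h : n ∈ sBad
    · simp [hψdef, h, hu0 n]
    · simpa [hψdef, h] using (hkey n h z hz).2
  have hTU : TendstoUniformlyOn (fun t : Finset ℤ => fun z => ∑ n ∈ t, ψ n z)
      (fun z => ∑' n, ψ n z) atTop (Metric.ball z₀ 1) :=
    tendstoUniformlyOn_tsum hu (fun n z hz => hψu n z hz)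
  have hdiff : DifferentiableOn ℂ (fun z => ∑' n, ψ n z) (Metric.ball z₀ 1) := by
    apply hTU.tendstoLocallyUniformlyOn.differentiableOn ?_ Metric.isOpen_ball
    filter_upwards with t
    apply DifferentiableOn.fun_sum
    intro n _
    by_cases h : n ∈ sBad
    · simp only [hψdef, h, if_true]
      exact differentiableOn_const 0
    · simp only [hψdef, h, if_false]
      rw [show gm m τ w n = fun z => (n : ℂ) ^ m * eF w ^ n / (1 - eF z * eF τ ^ n) from rfl]
      apply DifferentiableOn.div (differentiableOn_const _)
      · exact (differentiableOn_const _).sub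
          ((differentiable_eF.differentiableOn).mul (differentiableOn_const _))
      · exact fun z hz => (hkey n h z hz).1
  have hanψ : AnalyticAt ℂ (fun z => ∑' n, ψ n z) z₀ :=
    hdiff.analyticAt (Metric.ball_mem_nhds z₀ one_pos)
  refine ⟨fun z => (∑ n ∈ sBad.erase n₀, gm m τ w n z) + ∑' n, ψ n z, ?_, ?_⟩
  · apply AnalyticAt.add ?_ hanψ
    apply Finset.analyticAt_fun_sum
    intro n hn
    exact analyticAt_gm m n (hpol n (Finset.ne_of_mem_erase hn))
  · filter_upwards [Metric.ball_mem_nhds z₀ one_pos] with z hz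
    have hsψ : Summable (fun n => ψ n z) :=
      Summable.of_norm_bounded hu (fun n => hψu n z hz)
    have hmid : Summable (fun n => if n ∈ sBad.erase n₀ then gm m τ w n z else 0) :=
      summable_of_ne_finset_zero (s := sBad.erase n₀) (fun n hn => if_neg hn)
    have hsingle : Summable (fun n : ℤ => if n = n₀ then gm m τ w n₀ z else 0) :=
      summable_of_ne_finset_zero (s := {n₀}) (fun n hn => by
        simp only [Finset.mem_singleton] at hn; exact if_neg hn)
    have hfun : ∀ n : ℤ, gm m τ w n z
        = ψ n z + ((if n ∈ sBad.erase n₀ then gm m τ w n z else 0)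
            + (if n = n₀ then gm m τ w n₀ z else 0)) := by
      intro n
      by_cases h1 : n = n₀
      · subst h1
        simp [hψdef, hn₀Bad]
      · by_cases h2 : n ∈ sBad
        · have h3 : n ∈ sBad.erase n₀ := Finset.mem_erase.mpr ⟨h1, h2⟩
          simp [hψdef, h1, h2, h3]
        · have h3 : n ∉ sBad.erase n₀ := fun hc => h2 (Finset.mem_of_mem_erase hc)
          simp [hψdef, h1, h2, h3]
    have hGmz := calc Gm m τ w z = ∑' n : ℤ, gm m τ w n z := rfl
      _ = ∑' n : ℤ, (ψ n z + ((if n ∈ sBad.erase n₀ then gm m τ w n z else 0)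
            + (if n = n₀ then gm m τ w n₀ z else 0))) := tsum_congr hfun
      _ = (∑' n, ψ n z) + ∑' n : ℤ, ((if n ∈ sBad.erase n₀ then gm m τ w n z else 0)
            + (if n = n₀ then gm m τ w n₀ z else 0)) :=
          Summable.tsum_add hsψ (hmid.add hsingle)
      _ = (∑' n, ψ n z) + ((∑' n : ℤ, if n ∈ sBad.erase n₀ then gm m τ w n z else 0)
            + ∑' n : ℤ, (if n = n₀ then gm m τ w n₀ z else 0)) := by
          rw [Summable.tsum_add hmid hsingle]
      _ = (∑' n, ψ n z) + ((∑ n ∈ sBad.erase n₀, gm m τ w n z) + gm m τ w n₀ z) := by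
          rw [tsum_eq_sum (s := sBad.erase n₀) (fun n hn => if_neg hn), tsum_ite_eq]
          congr 2
          exact Finset.sum_congr rfl (fun n hn => if_pos hn)
    rw [hGmz]
    ring

lemma meromorphicAt_Gm (m : ℕ) (τ w : ℂ) (hτ : 0 < τ.im)
    (hqw : ‖eF τ‖ < ‖eF w‖) (hw1 : ‖eF w‖ < 1)
    (z₀ : ℂ) : MeromorphicAt (Gm m τ w) z₀ := by
  have hmain : ∀ n₀ : ℤ, (∀ n : ℤ, n ≠ n₀ → 1 - eF z₀ * eF τ ^ n ≠ 0) →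
      MeromorphicAt (Gm m τ w) z₀ := by
    intro n₀ hpol
    obtain ⟨T, hT, hev⟩ := master m τ w hτ hqw hw1 z₀ n₀ hpol
    have hgm : MeromorphicAt (gm m τ w n₀) z₀ :=
      (MeromorphicAt.const _ z₀).div (analyticAt_den τ n₀ z₀).meromorphicAt
    have heq : (fun z => gm m τ w n₀ z + T z) =ᶠ[𝓝[≠] z₀] Gm m τ w :=
      (hev.filter_mono nhdsWithin_le_nhds).mono (fun z hz => hz.symm)
    exact (hgm.add hT.meromorphicAt).congr heq
  by_cases h : ∃ n : ℤ, 1 - eF z₀ * eF τ ^ n = 0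
  · obtain ⟨n₀, hn₀⟩ := h
    refine hmain n₀ (fun n hne hz => hne ?_)
    exact bad_unique hτ (sub_eq_zero.mp hz).symm (sub_eq_zero.mp hn₀).symm
  · push_neg at h
    exact hmain 0 (fun n _ => h n)

lemma analyticAt_Gm (m : ℕ) (τ w : ℂ) (hτ : 0 < τ.im)
    (hqw : ‖eF τ‖ < ‖eF w‖) (hw1 : ‖eF w‖ < 1)
    (z₀ : ℂ) (h : ∀ n : ℤ, 1 - eF z₀ * eF τ ^ n ≠ 0) : AnalyticAt ℂ (Gm m τ w) z₀ := by
  obtain ⟨T, hT, hev⟩ := master m τ w hτ hqw hw1 z₀ 0 (fun n _ => h n)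
  exact ((analyticAt_gm m 0 (h 0)).add hT).congr (hev.mono fun z hz => hz.symm)

lemma den_ne_zero_of_nonlattice {τ : ℂ} (z₀ : ℂ)
    (h : ∀ l mu : ℤ, z₀ ≠ (l : ℂ) * τ + (mu : ℂ)) :
    ∀ n : ℤ, 1 - eF z₀ * eF τ ^ n ≠ 0 := by
  intro n hden
  have h1 : eF (z₀ + n * τ) = 1 := by
    rw [eF_add, ← eF_zpow]; exact (sub_eq_zero.mp hden).symm
  rw [eF_eq_one_iff] at h1
  obtain ⟨k, hk⟩ := h1
  apply h (-n) k
  push_cast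
  linear_combination hk

lemma den_zero_lattice {τ : ℂ} (l mu : ℤ) :
    1 - eF ((l : ℂ) * τ + (mu : ℂ)) * eF τ ^ (-l : ℤ) = 0 := by
  rw [eF_zpow, ← eF_add]
  rw [show (l : ℂ) * τ + (mu : ℂ) + ((-l : ℤ) : ℂ) * τ = ((mu : ℤ) : ℂ) by push_cast; ring]
  rw [sub_eq_zero, (eF_eq_one_iff _).mpr ⟨mu, rfl⟩]

lemma den_ne_zero_lattice {τ : ℂ} (hτ : 0 < τ.im) (l mu : ℤ) :
    ∀ n : ℤ, n ≠ -l → 1 - eF ((l : ℂ) * τ + (mu : ℂ)) * eF τ ^ n ≠ 0 := by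
  intro n hne hden
  exact hne (bad_unique hτ (sub_eq_zero.mp hden).symm
    (sub_eq_zero.mp (den_zero_lattice l mu)).symm)

lemma residue_Gm (m : ℕ) (τ w : ℂ) (hτ : 0 < τ.im)
    (hqw : ‖eF τ‖ < ‖eF w‖) (hw1 : ‖eF w‖ < 1)
    (l mu : ℤ) :
    Filter.Tendsto (fun z : ℂ => (z - ((l : ℂ) * τ + (mu : ℂ))) * Gm m τ w z)
      (𝓝[≠] ((l : ℂ) * τ + (mu : ℂ)))
      (𝓝 ((((-l : ℤ)) : ℂ) ^ m * eF w ^ (-l : ℤ) * (-(2 * (Real.pi : ℂ) * Complex.I))⁻¹)) := by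
  set z₀ : ℂ := (l : ℂ) * τ + (mu : ℂ) with hz₀def
  have hzero : 1 - eF z₀ * eF τ ^ (-l : ℤ) = 0 := den_zero_lattice l mu
  obtain ⟨T, hT, hev⟩ := master m τ w hτ hqw hw1 z₀ (-l) (den_ne_zero_lattice hτ l mu)
  have h1 : Filter.Tendsto (fun z => (z - z₀) * T z) (𝓝[≠] z₀) (𝓝 0) := by
    have h2 : Filter.Tendsto (fun z => (z - z₀) * T z) (𝓝 z₀) (𝓝 ((z₀ - z₀) * T z₀)) :=
      ((continuous_id.sub continuous_const).continuousAt.tendsto).mul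
        hT.continuousAt.tendsto
    simpa using h2.mono_left nhdsWithin_le_nhds
  have hder : HasDerivAt (fun z => 1 - eF z * eF τ ^ (-l : ℤ))
      (-(2 * (Real.pi : ℂ) * Complex.I)) z₀ := by
    have h3 := ((hasDerivAt_eF z₀).mul_const (eF τ ^ (-l : ℤ))).const_sub 1
    have h4 : eF z₀ * eF τ ^ (-l : ℤ) = 1 := (sub_eq_zero.mp hzero).symm
    exact h3.congr_deriv (by rw [mul_assoc (2 * (Real.pi : ℂ) * Complex.I), h4, mul_one])
  have hslope : Filter.Tendsto
      (fun z => (1 - eF z * eF τ ^ (-l : ℤ)) / (z - z₀)) (𝓝[≠] z₀)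
      (𝓝 (-(2 * (Real.pi : ℂ) * Complex.I))) := by
    have h5 := hasDerivAt_iff_tendsto_slope.mp hder
    apply h5.congr
    intro z
    rw [slope_def_field, hzero, sub_zero]
  have hinv : Filter.Tendsto
      (fun z => (z - z₀) / (1 - eF z * eF τ ^ (-l : ℤ))) (𝓝[≠] z₀)
      (𝓝 ((-(2 * (Real.pi : ℂ) * Complex.I))⁻¹)) := by
    have h6 := hslope.inv₀ (neg_ne_zero.mpr Complex.two_pi_I_ne_zero)
    apply h6.congr
    intro z
    rw [inv_div]
  have hfin := (hinv.const_mul ((((-l : ℤ)) : ℂ) ^ m * eF w ^ (-l : ℤ))).add h1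
  rw [add_zero] at hfin
  apply hfin.congr'
  filter_upwards [hev.filter_mono nhdsWithin_le_nhds] with z hz
  rw [hz]
  simp only [gm]
  ring

lemma mero_dichotomy {f : ℂ → ℂ} {x : ℂ} (hf : MeromorphicAt f x) :
    (∀ᶠ z in 𝓝[≠] x, f z = 0) ∨ (∀ᶠ z in 𝓝[≠] x, f z ≠ 0) := by
  rcases eq_or_ne (meromorphicOrderAt f x) ⊤ with h | h
  · exact Or.inl (meromorphicOrderAt_eq_top_iff.mp h)
  · right
    obtain ⟨n, hn⟩ := WithTop.ne_top_iff_exists.mp h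
    obtain ⟨g, hg, hg0, heq⟩ := (meromorphicOrderAt_eq_int_iff (n := n) hf).mp hn.symm
    have hgne : ∀ᶠ z in 𝓝 x, g z ≠ 0 := hg.continuousAt.eventually_ne hg0
    filter_upwards [heq, hgne.filter_mono nhdsWithin_le_nhds, self_mem_nhdsWithin]
      with z h1 h2 h3
    rw [h1]
    exact smul_ne_zero (zpow_ne_zero _ (sub_ne_zero.mpr h3)) h2

lemma eq_zero_on_punctured {D : ℂ → ℂ} (hD : ∀ z : ℂ, MeromorphicAt D z) (z₁ : ℂ)
    (hz₁ : ∀ᶠ z in 𝓝[≠] z₁, D z = 0) :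
    ∀ z₀ : ℂ, ∀ᶠ z in 𝓝[≠] z₀, D z = 0 := by
  set A : Set ℂ := {z : ℂ | ∀ᶠ w in 𝓝[≠] z, D w = 0} with hAdef
  have hopen : IsOpen A := by
    rw [isOpen_iff_mem_nhds]
    intro z hz
    have hz' : ∀ᶠ w in 𝓝 z, w ≠ z → D w = 0 := eventually_nhdsWithin_iff.mp hz
    filter_upwards [eventually_eventually_nhds.mpr hz'] with y hy
    by_cases hyz : y = z
    · subst hyz; exact hz
    · rw [Set.mem_setOf_eq, eventually_nhdsWithin_iff]
      filter_upwards [hy, eventually_ne_nhds hyz] with v hv hvz _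
      exact hv hvz
  have hclosed : IsClosed A := by
    rw [isClosed_iff_frequently]
    intro x hx
    have hfreq : ∃ᶠ w in 𝓝[≠] x, D w = 0 := by
      rw [Filter.frequently_iff]
      intro U hU
      obtain ⟨V, hV, hVU⟩ := mem_nhdsWithin_iff_exists_mem_nhds_inter.mp hU
      have hIV : interior V ∈ 𝓝 x := interior_mem_nhds.mpr hV
      obtain ⟨a, haV, haA⟩ := (Filter.frequently_iff.mp hx) hIV
      have hWa : ∀ᶠ w in 𝓝[≠] a, D w = 0 ∧ w ∈ interior V ∧ w ≠ x := by
        have haA' : ∀ᶠ w in 𝓝[≠] a, D w = 0 := haA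
        refine haA'.and (Filter.Eventually.and ?_ ?_)
        · exact eventually_nhdsWithin_of_eventually_nhds
            (isOpen_interior.eventually_mem haV)
        · by_cases hax : a = x
          · subst hax; exact self_mem_nhdsWithin
          · exact eventually_nhdsWithin_of_eventually_nhds (eventually_ne_nhds hax)
      obtain ⟨wpt, hw1, hw2, hw3⟩ := hWa.exists
      exact ⟨wpt, hVU ⟨interior_subset hw2, hw3⟩, hw1⟩
    rcases mero_dichotomy (hD x) with h | h
    · exact h
    · obtain ⟨wpt, hw1, hw2⟩ := (hfreq.and_eventually h).exists
      exact absurd hw1 hw2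
  have hclopen : IsClopen A := ⟨hclosed, hopen⟩
  have hA : A = Set.univ := hclopen.eq_univ ⟨z₁, hz₁⟩
  intro z₀
  have : z₀ ∈ A := hA ▸ Set.mem_univ z₀
  exact this

/-- Fix `m ∈ ℕ₀`, `τ ∈ ℍ` and `w` with `0 < |q| < |q_w| < 1`.  Any meromorphic
function `F` on `ℂ` agreeing with the series
`P̃_{m+1}(w,z,τ) := ((−1)^{m+1}/m!) ∑_{n∈ℤ} n^m q_w^n/(1 − q_z q^n)` (as a function of `z`)
on its domain of convergence has no poles away from `z ∈ ℤτ + ℤ` (the limit of `F z` exists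
there), and at each `z = λτ + μ` it has at worst a simple pole with residue
`λ^m q_w^{−λ}/(m!·2πi)` (for `λ = 0`, `m ≥ 1` this residue is `0`, i.e. `F` is regular). -/
theorem Ptilde_poles_and_residues (m : ℕ) (τ w : ℂ) (hτ : 0 < τ.im)
    (hqw : ‖eF τ‖ < ‖eF w‖) (hw1 : ‖eF w‖ < 1)
    (F : ℂ → ℂ) (hF : MeromorphicOn F (Set.univ : Set ℂ))
    (hFagree : ∀ z : ℂ,
      ‖eF τ‖ < ‖eF z‖ → ‖eF z‖ < 1 →
      F z = ((-1 : ℂ) ^ (m + 1) / (m.factorial : ℂ)) *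
        ∑' n : ℤ, (n : ℂ) ^ m * eF w ^ n / (1 - eF z * eF τ ^ n)) :
    (∀ z₀ : ℂ, (∀ l mu : ℤ, z₀ ≠ (l : ℂ) * τ + (mu : ℂ)) →
      ∃ c : ℂ, Filter.Tendsto F (𝓝[≠] z₀) (𝓝 c)) ∧
    (∀ l mu : ℤ,
      Filter.Tendsto (fun z : ℂ => (z - ((l : ℂ) * τ + (mu : ℂ))) * F z)
        (𝓝[≠] ((l : ℂ) * τ + (mu : ℂ)))
        (𝓝 ((l : ℂ) ^ m * eF w ^ (-l) /
          ((m.factorial : ℂ) * (2 * (Real.pi : ℂ) * Complex.I))))) := by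
  set c : ℂ := (-1 : ℂ) ^ (m + 1) / (m.factorial : ℂ) with hcdef
  -- F agrees with c * Gm on the strip
  have hagree : ∀ z : ℂ, ‖eF τ‖ < ‖eF z‖ →
      ‖eF z‖ < 1 → F z = c * Gm m τ w z := by
    intro z h1 h2
    rw [hFagree z h1 h2]
    rfl
  -- D = F - c * Gm is meromorphic everywhere
  have hD : ∀ z : ℂ, MeromorphicAt (fun z => F z - c * Gm m τ w z) z := by
    intro z
    exact (hF z (Set.mem_univ z)).sub
      ((MeromorphicAt.const c z).mul (meromorphicAt_Gm m τ w hτ hqw hw1 z))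
  -- a strip point
  have hz₁ : ∀ᶠ z in 𝓝[≠] ((2⁻¹ : ℝ) • τ), F z - c * Gm m τ w z = 0 := by
    have hc : Continuous fun z : ℂ => ‖eF z‖ :=
      continuous_norm.comp differentiable_eF.continuous
    have hopenS : IsOpen {z : ℂ | ‖eF τ‖ < ‖eF z‖ ∧
        ‖eF z‖ < 1} :=
      (isOpen_lt continuous_const hc).inter (isOpen_lt hc continuous_const)
    have hmem : (2⁻¹ : ℝ) • τ ∈ {z : ℂ | ‖eF τ‖ < ‖eF z‖ ∧
        ‖eF z‖ < 1} := by
      constructor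
      · rw [abs_eF_lt_abs_eF, Complex.smul_im, smul_eq_mul]
        linarith
      · rw [abs_eF_lt_one, Complex.smul_im, smul_eq_mul]
        linarith
    have := hopenS.mem_nhds hmem
    filter_upwards [eventually_nhdsWithin_of_eventually_nhds
      (eventually_of_mem this (fun z hz => hz))] with z hz
    rw [hagree z hz.1 hz.2, sub_self]
  have hFS : ∀ z₀ : ℂ, ∀ᶠ z in 𝓝[≠] z₀, F z = c * Gm m τ w z := by
    intro z₀
    have := eq_zero_on_punctured hD _ hz₁ z₀
    filter_upwards [this] with z hz
    exact sub_eq_zero.mp hz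
  constructor
  · intro z₀ hz₀
    have han : AnalyticAt ℂ (Gm m τ w) z₀ :=
      analyticAt_Gm m τ w hτ hqw hw1 z₀ (den_ne_zero_of_nonlattice z₀ hz₀)
    refine ⟨c * Gm m τ w z₀, ?_⟩
    have h1 : Filter.Tendsto (fun z => c * Gm m τ w z) (𝓝[≠] z₀)
        (𝓝 (c * Gm m τ w z₀)) :=
      ((continuousAt_const.mul han.continuousAt).tendsto).mono_left nhdsWithin_le_nhds
    exact h1.congr' ((hFS z₀).mono fun z hz => hz.symm)
  · intro l mu
    set z₀ : ℂ := (l : ℂ) * τ + (mu : ℂ) with hz₀def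
    have hres := residue_Gm m τ w hτ hqw hw1 l mu
    have h2 : Filter.Tendsto (fun z => (z - z₀) * (c * Gm m τ w z)) (𝓝[≠] z₀)
        (𝓝 (c * ((((-l : ℤ)) : ℂ) ^ m * eF w ^ (-l : ℤ) *
          (-(2 * (Real.pi : ℂ) * Complex.I))⁻¹))) := by
      apply (hres.const_mul c).congr
      intro z
      ring
    have h3 : Filter.Tendsto (fun z => (z - z₀) * F z) (𝓝[≠] z₀)
        (𝓝 (c * ((((-l : ℤ)) : ℂ) ^ m * eF w ^ (-l : ℤ) *
          (-(2 * (Real.pi : ℂ) * Complex.I))⁻¹))) := by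
      apply h2.congr' ((hFS z₀).mono fun z hz => by rw [hz])
    have hval : c * ((((-l : ℤ)) : ℂ) ^ m * eF w ^ (-l : ℤ) *
        (-(2 * (Real.pi : ℂ) * Complex.I))⁻¹)
        = (l : ℂ) ^ m * eF w ^ (-l) /
          ((m.factorial : ℂ) * (2 * (Real.pi : ℂ) * Complex.I)) := by
      have hfac : (m.factorial : ℂ) ≠ 0 := by
        exact_mod_cast Nat.cast_ne_zero.mpr m.factorial_ne_zero
      have h2pi := Complex.two_pi_I_ne_zero
      have hneg : (((-l : ℤ)) : ℂ) = -(l : ℂ) := by push_cast; ring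
      have hsign : ((-1 : ℂ)) ^ (m + 1) * ((-1 : ℂ)) ^ m = -1 := by
        rw [← pow_add, show m + 1 + m = 2 * m + 1 from by ring, pow_add, pow_mul]
        norm_num
      rw [hcdef, hneg, neg_pow, inv_neg]
      linear_combination
        (-((l : ℂ) ^ m * eF w ^ (-l : ℤ) * (2 * (Real.pi : ℂ) * Complex.I)⁻¹ /
          (m.factorial : ℂ))) * hsign
    rw [hval] at h3
    exact h3
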